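/- Let ε ∈ (0, 1/(2M)]. For every ε-orthogonally partitionable unit-norm sequence F in C^M with N vectors, there exists an orthogonally partitionable unit-norm sequence F̃ (same partition sizes) with ‖F̃ − F‖_HS ≤ (2N)^{1/2}(Mε)^{1/3}. -/

import Mathlib

noncomputable section
open scoped InnerProductSpace
open Finset

def col {M N : ℕ} (F : Matrix (Fin M) (Fin N) ℂ) (n : Fin N) : EuclideanSpace ℂ (Fin M) :=
  (WithLp.equiv 2 (Fin M → ℂ)).symm (fun m => F m n)

def hsq {M N : ℕ} (A : Matrix (Fin M) (Fin N) ℂ) : ℝ := ∑ i, ∑ j, ‖A i j‖ ^ 2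

namespace JumpAux

variable {E : Type*} [NormedAddCommGroup E] [InnerProductSpace ℂ E]

lemma perturb (v w g : E) (hvw : ⟪v, w⟫_ℂ = 0) (h1 : ‖v‖ ^ 2 + ‖w‖ ^ 2 = 1)
    (hg : ‖g‖ = 1) (hgw : ⟪g, w⟫_ℂ = 0)
    (hgv : v ≠ 0 → g = ((‖v‖ : ℂ))⁻¹ • v) :
    ‖g - (v + w)‖ ^ 2 ≤ 2 * ‖w‖ ^ 2 := by
  have hvle : ‖v‖ ≤ 1 := by nlinarith [norm_nonneg v, norm_nonneg w, sq_nonneg (‖w‖)]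
  have hwle : ‖w‖ ≤ 1 := by nlinarith [norm_nonneg v, norm_nonneg w]
  have hgv' : ‖g - v‖ = 1 - ‖v‖ := by
    by_cases hv : v = 0
    · simp [hv, hg]
    · rw [hgv hv]
      have hnv : (0:ℝ) < ‖v‖ := norm_pos_iff.mpr hv
      have h2 : ((‖v‖:ℂ))⁻¹ • v - v = ((((‖v‖:ℝ))⁻¹ - 1 : ℝ) : ℂ) • v := by
        push_cast; rw [sub_smul, one_smul]
      rw [h2, norm_smul]
      simp only [Complex.norm_real, Real.norm_eq_abs]
      rw [abs_of_nonneg (by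
        rw [sub_nonneg]
        exact one_le_inv_iff₀.mpr ⟨hnv, hvle⟩)]
      field_simp
  have hinner : ⟪g - v, w⟫_ℂ = 0 := by
    rw [inner_sub_left, hgw, hvw, sub_zero]
  have hexpand : ‖g - (v + w)‖ ^ 2 = ‖g - v‖ ^ 2 + ‖w‖ ^ 2 := by
    have h3 : g - (v + w) = (g - v) - w := by abel
    rw [h3, @norm_sub_sq ℂ, hinner]
    simp
  rw [hexpand, hgv']
  nlinarith [norm_nonneg v, norm_nonneg w]

lemma inner_comb {M' : ℕ} (e : OrthonormalBasis (Fin M') ℂ E) {s t : Finset (Fin M')}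
    (hst : Disjoint s t) (a b : Fin M' → ℂ) :
    ⟪∑ k ∈ s, a k • e k, ∑ l ∈ t, b l • e l⟫_ℂ = 0 := by
  rw [inner_sum]
  refine Finset.sum_eq_zero fun l hl => ?_
  rw [sum_inner]
  refine Finset.sum_eq_zero fun k hk => ?_
  rw [inner_smul_left, inner_smul_right]
  have hkl : k ≠ l := fun h => Finset.disjoint_left.mp hst hk (h ▸ hl)
  have : ⟪e k, e l⟫_ℂ = 0 := e.orthonormal.2 hkl
  rw [this]; ring

lemma norm_comb {M' : ℕ} (e : OrthonormalBasis (Fin M') ℂ E) (s : Finset (Fin M'))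
    (a : Fin M' → ℂ) :
    ‖∑ k ∈ s, a k • e k‖ ^ 2 = ∑ k ∈ s, ‖a k‖ ^ 2 := by
  classical
  have h : ⟪∑ k ∈ s, a k • e k, ∑ l ∈ s, a l • e l⟫_ℂ = ((∑ k ∈ s, ‖a k‖ ^ 2 : ℝ) : ℂ) := by
    rw [inner_sum]
    have : ∀ l ∈ s, ⟪∑ k ∈ s, a k • e k, a l • e l⟫_ℂ = (‖a l‖ ^ 2 : ℝ) := by
      intro l hl
      rw [inner_smul_right, sum_inner]
      have h2 : ∀ k ∈ s, ⟪a k • e k, e l⟫_ℂ = if k = l then (starRingEnd ℂ) (a k) else 0 := by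
        intro k hk
        rw [inner_smul_left]
        rcases eq_or_ne k l with h | h
        · subst h
          rw [if_pos rfl]
          have : ⟪e k, e k⟫_ℂ = 1 := by
            have := e.orthonormal.1 k
            rw [@inner_self_eq_norm_sq_to_K ℂ, this]
            norm_num
          rw [this, mul_one]
        · rw [if_neg h, e.orthonormal.2 h, mul_zero]
      rw [Finset.sum_congr rfl h2, Finset.sum_ite_eq' s l]
      rw [if_pos hl, RCLike.mul_conj]
      norm_cast
    rw [Finset.sum_congr rfl this]
    push_cast
    ring
  have h2 : ((‖∑ k ∈ s, a k • e k‖ ^ 2 : ℝ) : ℂ) = ((∑ k ∈ s, ‖a k‖ ^ 2 : ℝ) : ℂ) := by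
    rw [← h, @inner_self_eq_norm_sq_to_K ℂ]
    norm_cast
  exact_mod_cast h2

lemma norm_sq_eucl {M' : ℕ} (x : EuclideanSpace ℂ (Fin M')) : ‖x‖ ^ 2 = ∑ m, ‖x m‖ ^ 2 := by
  rw [EuclideanSpace.norm_eq, Real.sq_sqrt]
  positivity

end JumpAux

open JumpAux

set_option maxHeartbeats 2000000 in
theorem jump_to_orthogonally_partitionable
    (M N : ℕ) (hM : 0 < M) (ε : ℝ) (hε0 : 0 < ε) (hε1 : ε ≤ 1 / (2 * M))
    (F : Matrix (Fin M) (Fin N) ℂ)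
    (hunit : ∀ n : Fin N, ‖col F n‖ = 1)
    (I : Finset (Fin N)) (hIne : I ≠ ∅) (hInu : I ≠ univ)
    (hop : ∀ i ∈ I, ∀ j ∉ I, ‖⟪col F i, col F j⟫_ℂ‖ < ε) :
    ∃ Ft : Matrix (Fin M) (Fin N) ℂ,
      (∀ n : Fin N, ‖col Ft n‖ = 1) ∧
      (∀ i ∈ I, ∀ j ∉ I, ⟪col Ft i, col Ft j⟫_ℂ = 0) ∧
      Real.sqrt (hsq (Ft - F)) ≤ Real.sqrt (2 * N) * ((M : ℝ) * ε) ^ ((1 : ℝ) / 3) := by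
  classical
  obtain ⟨i₀, hi₀⟩ : ∃ i, i ∈ I := Finset.nonempty_iff_ne_empty.mpr hIne
  obtain ⟨j₀, hj₀⟩ : ∃ j, j ∉ I := by
    by_contra h
    push_neg at h
    exact hInu (Finset.eq_univ_iff_forall.mpr h)
  set f : Fin N → EuclideanSpace ℂ (Fin M) := col F with hf
  have hMε : (M : ℝ) * ε ≤ 1 / 2 := by
    rw [le_div_iff₀ (by norm_num : (0:ℝ) < 2)]
    have hM0 : (0:ℝ) < (M:ℝ) := by exact_mod_cast hM
    calc (M:ℝ) * ε * 2 = ε * (2 * M) := by ring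
    _ ≤ (1 / (2 * M)) * (2 * M) := by
        apply mul_le_mul_of_nonneg_right hε1
        positivity
    _ = 1 := by field_simp
  have hM2 : 2 ≤ M := by
    by_contra hcon
    push_neg at hcon
    interval_cases M
    have hinner1 : ∀ u v : EuclideanSpace ℂ (Fin 1), ⟪u, v⟫_ℂ = (starRingEnd ℂ) (u 0) * v 0 := by
      intro u v
      simp [PiLp.inner_apply, RCLike.inner_apply]
      ring
    have hkey1 : ∀ n, ‖f n 0‖ = 1 := by
      intro n
      have h0 : ⟪f n, f n⟫_ℂ = ((‖f n 0‖ : ℂ)) ^ 2 := by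
        rw [hinner1]
        exact RCLike.conj_mul _
      have h1 : ⟪f n, f n⟫_ℂ = ((1 : ℝ) : ℂ) := by
        rw [@inner_self_eq_norm_sq_to_K ℂ, hunit n]
        norm_num
      rw [h0] at h1
      have h2 : (‖f n 0‖ : ℝ) ^ 2 = 1 := by exact_mod_cast h1
      nlinarith [norm_nonneg (f n 0)]
    have h1 : ‖⟪f i₀, f j₀⟫_ℂ‖ = 1 := by
      rw [hinner1, norm_mul, RCLike.norm_conj, hkey1, hkey1]
      norm_num
    have h2 := hop i₀ hi₀ j₀ hj₀
    rw [h1] at h2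
    have : ε ≤ 1 / 2 := by norm_num at hε1 ⊢; linarith
    linarith
  have hεQ : ε ≤ 1 / 4 := by
    have : (4:ℝ) ≤ 2 * M := by
      have : (2:ℝ) ≤ (M:ℝ) := by exact_mod_cast hM2
      linarith
    calc ε ≤ 1 / (2 * M) := hε1
    _ ≤ 1 / 4 := by
        apply one_div_le_one_div_of_le
        · norm_num
        · exact this
  have hN2 : 0 < N := Fin.pos i₀
  -- operator
  set T : EuclideanSpace ℂ (Fin M) →ₗ[ℂ] EuclideanSpace ℂ (Fin M) :=
    ∑ i ∈ I, ((innerSL ℂ (f i)).smulRight (f i) : _ →L[ℂ] _).toLinearMap with hT_def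
  have hTapp : ∀ x, T x = ∑ i ∈ I, ⟪f i, x⟫_ℂ • f i := by
    intro x
    rw [hT_def]
    simp [LinearMap.sum_apply]
  have hT : T.IsSymmetric := by
    intro x y
    rw [hTapp, hTapp, sum_inner, inner_sum]
    refine Finset.sum_congr rfl fun i hi => ?_
    rw [inner_smul_left, inner_smul_right, ← inner_conj_symm x (f i)]
    ring
  have hdim : Module.finrank ℂ (EuclideanSpace ℂ (Fin M)) = M := finrank_euclideanSpace_fin
  set e := hT.eigenvectorBasis hdim with he
  set μ := hT.eigenvalues hdim with hμdef
  have heig : ∀ k, T (e k) = (μ k : ℂ) • e k := fun k => hT.apply_eigenvectorBasis hdim k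
  set c : Fin M → Fin N → ℂ := fun k n => ⟪e k, f n⟫_ℂ with hc
  have hsumrepr : ∀ n, ∑ k, c k n • e k = f n := fun n => e.sum_repr' (f n)
  have hpars : ∀ n, ∑ k, ‖c k n‖ ^ 2 = 1 := by
    intro n
    have h1 : ∑ k, ‖c k n‖ ^ 2 = ‖f n‖ ^ 2 := by
      rw [← norm_comb e univ (fun k => c k n), Finset.sum_congr rfl (fun k _ => rfl), hsumrepr n]
    rw [h1, hunit n]
    norm_num
  have hμ_eq : ∀ k, μ k = ∑ i ∈ I, ‖c k i‖ ^ 2 := by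
    intro k
    have h1 : ⟪e k, T (e k)⟫_ℂ = ((μ k : ℝ) : ℂ) := by
      rw [heig k, inner_smul_right]
      have h2 : ⟪e k, e k⟫_ℂ = 1 := by
        rw [@inner_self_eq_norm_sq_to_K ℂ, e.orthonormal.1 k]
        norm_num
      rw [h2, mul_one]
    have h2 : ⟪e k, T (e k)⟫_ℂ = ((∑ i ∈ I, ‖c k i‖ ^ 2 : ℝ) : ℂ) := by
      rw [hTapp, inner_sum]
      have h3 : ∀ i ∈ I, ⟪e k, ⟪f i, e k⟫_ℂ • f i⟫_ℂ = ((‖c k i‖ ^ 2 : ℝ) : ℂ) := by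
        intro i hi
        rw [inner_smul_right, ← inner_conj_symm (e k) (f i), RCLike.mul_conj]
        rw [← norm_inner_symm (f i) (e k)]
        norm_cast
      rw [Finset.sum_congr rfl h3]
      push_cast
      ring
    rw [h1] at h2
    exact_mod_cast h2
  have hμ0 : ∀ k, 0 ≤ μ k := by
    intro k
    rw [hμ_eq k]
    positivity
  have htrace : ∑ k, μ k = I.card := by
    rw [Finset.sum_congr rfl (fun k _ => hμ_eq k), Finset.sum_comm]
    rw [Finset.sum_congr rfl (fun i (hi : i ∈ I) => hpars i)]
    simp
  have hkey : ∀ (k : Fin M), ∀ j ∉ I, μ k * ‖c k j‖ ^ 2 ≤ ε ^ 2 * I.card := by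
    intro k j hj
    have hBC : ((μ k : ℝ) : ℂ) * c k j = ∑ i ∈ I, c k i * ⟪f i, f j⟫_ℂ := by
      have h1 : ⟪T (e k), f j⟫_ℂ = ((μ k : ℝ) : ℂ) * c k j := by
        rw [heig k, inner_smul_left, Complex.conj_ofReal]
      have h2 : ⟪T (e k), f j⟫_ℂ = ∑ i ∈ I, c k i * ⟪f i, f j⟫_ℂ := by
        rw [hTapp, sum_inner]
        refine Finset.sum_congr rfl fun i hi => ?_
        rw [inner_smul_left, inner_conj_symm]
      rw [← h1, h2]
    have hnorm1 : μ k * ‖c k j‖ ≤ ε * ∑ i ∈ I, ‖c k i‖ := by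
      have h3 : ‖((μ k : ℝ) : ℂ) * c k j‖ = μ k * ‖c k j‖ := by
        rw [norm_mul, Complex.norm_real, Real.norm_eq_abs, abs_of_nonneg (hμ0 k)]
      calc μ k * ‖c k j‖ = ‖((μ k : ℝ) : ℂ) * c k j‖ := h3.symm
      _ = ‖∑ i ∈ I, c k i * ⟪f i, f j⟫_ℂ‖ := by rw [hBC]
      _ ≤ ∑ i ∈ I, ‖c k i * ⟪f i, f j⟫_ℂ‖ := norm_sum_le _ _
      _ ≤ ∑ i ∈ I, ‖c k i‖ * ε := by
          refine Finset.sum_le_sum fun i hi => ?_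
          rw [norm_mul]
          exact mul_le_mul_of_nonneg_left (hop i hi j hj).le (norm_nonneg _)
      _ = ε * ∑ i ∈ I, ‖c k i‖ := by rw [← Finset.sum_mul]; ring
    have hCS : (∑ i ∈ I, ‖c k i‖) ^ 2 ≤ I.card * μ k := by
      calc (∑ i ∈ I, ‖c k i‖) ^ 2 ≤ I.card * ∑ i ∈ I, ‖c k i‖ ^ 2 :=
        sq_sum_le_card_mul_sum_sq
      _ = I.card * μ k := by rw [hμ_eq k]
    rcases eq_or_lt_of_le (hμ0 k) with h0 | h0
    · rw [← h0, zero_mul]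
      exact mul_nonneg (sq_nonneg ε) (Nat.cast_nonneg _)
    · have hge : 0 ≤ μ k * ‖c k j‖ := mul_nonneg (hμ0 k) (norm_nonneg _)
      have hsq2 : (μ k * ‖c k j‖) ^ 2 ≤ (ε * ∑ i ∈ I, ‖c k i‖) ^ 2 :=
        pow_le_pow_left₀ hge hnorm1 2
      have h4 : (μ k * ‖c k j‖ ^ 2) * μ k ≤ (ε ^ 2 * I.card) * μ k := by
        nlinarith [hsq2, hCS, sq_nonneg ε]
      exact le_of_mul_le_mul_right h4 h0
  -- threshold
  set t : ℝ := N * ε / 2 with ht_def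
  have htpos : 0 < t := by
    rw [ht_def]
    have : (0:ℝ) < N := by exact_mod_cast hN2
    positivity
  set A : Finset (Fin M) := univ.filter (fun k => t ≤ μ k) with hA
  obtain ⟨k₀, -, hk₀max⟩ := Finset.exists_max_image (univ : Finset (Fin M)) μ
    ⟨⟨0, hM⟩, Finset.mem_univ _⟩
  have hk₀ : (I.card : ℝ) ≤ M * μ k₀ := by
    calc (I.card : ℝ) = ∑ k, μ k := htrace.symm
    _ ≤ ∑ _k : Fin M, μ k₀ := Finset.sum_le_sum (fun k _ => hk₀max k (Finset.mem_univ k))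
    _ = M * μ k₀ := by simp [mul_comm]
  have hIcard : (1:ℝ) ≤ (I.card : ℝ) := by
    have : 0 < I.card := Finset.card_pos.mpr ⟨i₀, hi₀⟩
    exact_mod_cast this
  have hk₀pos : 0 < μ k₀ := by
    have hM0 : (0:ℝ) < (M:ℝ) := by exact_mod_cast hM
    nlinarith
  set K : Finset (Fin M) := insert k₀ A with hK
  have hk₀K : k₀ ∈ K := Finset.mem_insert_self _ _
  have hICN : I.card < N := by
    have := Finset.card_lt_card (Finset.ssubset_univ_iff.mpr hInu)
    simpa using this
  have hAchar : ∀ k, k ∉ A → μ k < t := by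
    intro k hk
    by_contra hcon
    push_neg at hcon
    exact hk (Finset.mem_filter.mpr ⟨Finset.mem_univ k, hcon⟩)
  have hAchar2 : ∀ k ∈ A, t ≤ μ k := fun k hk => (Finset.mem_filter.mp hk).2
  have hAne : A ≠ univ := by
    intro hAuniv
    have hall : ∀ k : Fin M, ‖c k j₀‖ ^ 2 * t ≤ ε ^ 2 * I.card := by
      intro k
      have hkA : k ∈ A := by rw [hAuniv]; exact Finset.mem_univ k
      have h5 := hkey k j₀ hj₀
      calc ‖c k j₀‖ ^ 2 * t = t * ‖c k j₀‖ ^ 2 := mul_comm _ _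
      _ ≤ μ k * ‖c k j₀‖ ^ 2 := mul_le_mul_of_nonneg_right (hAchar2 k hkA) (sq_nonneg _)
      _ ≤ ε ^ 2 * I.card := h5
    have hsum : (1 : ℝ) * t ≤ M * (ε ^ 2 * I.card) := by
      calc (1 : ℝ) * t = (∑ k, ‖c k j₀‖ ^ 2) * t := by rw [hpars j₀]
      _ = ∑ k, ‖c k j₀‖ ^ 2 * t := by rw [Finset.sum_mul]
      _ ≤ ∑ _k : Fin M, ε ^ 2 * I.card := Finset.sum_le_sum fun k _ => hall k
      _ = M * (ε ^ 2 * I.card) := by simp [mul_comm]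
    rw [one_mul, ht_def] at hsum
    have h5 : (N : ℝ) * ε ≤ (2 * M * ε * I.card) * ε := by linarith [hsum]
    have h6 : (N : ℝ) ≤ 2 * M * ε * I.card := le_of_mul_le_mul_right h5 hε0
    have h9 : (2 * (M:ℝ) * ε) * I.card ≤ 1 * I.card :=
      mul_le_mul_of_nonneg_right (by linarith [hMε]) (by linarith [hIcard])
    have h8 : ((I.card : ℝ)) < N := by exact_mod_cast hICN
    linarith
  obtain ⟨k₁, hk₁⟩ : ∃ k, k ∉ K := by
    obtain ⟨k', hk'⟩ : ∃ k, k ∉ A := by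
      by_contra h
      push_neg at h
      exact hAne (Finset.eq_univ_iff_forall.mpr h)
    rcases eq_or_ne k' k₀ with h | h
    · subst h
      obtain ⟨k'', hk''⟩ : ∃ k'' : Fin M, k'' ≠ k' := by
        have h1 : 1 < Fintype.card (Fin M) := by simpa using lt_of_lt_of_le one_lt_two hM2
        exact Fintype.exists_ne_of_one_lt_card h1 k'
      refine ⟨k'', fun hmem => ?_⟩
      rcases Finset.mem_insert.mp hmem with h2 | h2
      · exact hk'' h2
      · exact absurd (lt_of_le_of_lt (hAchar2 _ h2 |>.trans (hk₀max k'' (Finset.mem_univ _)))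
          (hAchar _ hk')) (lt_irrefl _)
    · refine ⟨k', fun hmem => ?_⟩
      rcases Finset.mem_insert.mp hmem with h2 | h2
      · exact h h2
      · exact hk' h2
  -- components
  set P : Fin N → EuclideanSpace ℂ (Fin M) := fun n => ∑ k ∈ K, c k n • e k with hP
  set Q : Fin N → EuclideanSpace ℂ (Fin M) := fun n => ∑ k ∈ Kᶜ, c k n • e k with hQ
  have hPQ : ∀ n, P n + Q n = f n := by
    intro n
    rw [hP, hQ, Finset.sum_add_sum_compl]
    exact hsumrepr n
  have hPnorm : ∀ n, ‖P n‖ ^ 2 = ∑ k ∈ K, ‖c k n‖ ^ 2 := fun n => norm_comb e K _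
  have hQnorm : ∀ n, ‖Q n‖ ^ 2 = ∑ k ∈ Kᶜ, ‖c k n‖ ^ 2 := fun n => norm_comb e Kᶜ _
  have hsplit : ∀ n, ‖P n‖ ^ 2 + ‖Q n‖ ^ 2 = 1 := by
    intro n
    rw [hPnorm, hQnorm, Finset.sum_add_sum_compl]
    exact hpars n
  have hPQorth : ∀ n m, ⟪P n, Q m⟫_ℂ = 0 := fun n m =>
    inner_comb e disjoint_compl_right _ _
  set g : Fin N → EuclideanSpace ℂ (Fin M) := fun n =>
    if n ∈ I then (if P n = 0 then e k₀ else ((‖P n‖ : ℂ))⁻¹ • P n)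
    else (if Q n = 0 then e k₁ else ((‖Q n‖ : ℂ))⁻¹ • Q n) with hg
  have hgunit : ∀ n, ‖g n‖ = 1 := by
    intro n
    simp only [hg]
    have hek : ∀ k, ‖e k‖ = 1 := e.orthonormal.1
    split_ifs with h1 h2 h3
    · exact hek k₀
    · rw [norm_smul]
      simp only [norm_inv, Complex.norm_real, Real.norm_eq_abs,
        abs_of_nonneg (norm_nonneg _)]
      field_simp
    · exact hek k₁
    · rw [norm_smul]
      simp only [norm_inv, Complex.norm_real, Real.norm_eq_abs,
        abs_of_nonneg (norm_nonneg _)]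
      field_simp
  have hgI : ∀ i ∈ I, ∃ a : Fin M → ℂ, g i = ∑ k ∈ K, a k • e k := by
    intro i hi
    rw [hg]
    simp only [if_pos hi]
    by_cases h : P i = 0
    · rw [if_pos h]
      refine ⟨fun k => if k = k₀ then 1 else 0, ?_⟩
      simp only [ite_smul, one_smul, zero_smul]
      rw [Finset.sum_ite_eq' K k₀ (fun k => e k), if_pos hk₀K]
    · rw [if_neg h]
      refine ⟨fun k => (‖P i‖ : ℂ)⁻¹ * c k i, ?_⟩
      rw [hP, Finset.smul_sum]
      exact Finset.sum_congr rfl (fun k _ => by rw [smul_smul])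
  have hgJ : ∀ j ∉ I, ∃ b : Fin M → ℂ, g j = ∑ k ∈ Kᶜ, b k • e k := by
    intro j hj
    rw [hg]
    simp only [if_neg hj]
    by_cases h : Q j = 0
    · rw [if_pos h]
      refine ⟨fun k => if k = k₁ then 1 else 0, ?_⟩
      simp only [ite_smul, one_smul, zero_smul]
      rw [Finset.sum_ite_eq' Kᶜ k₁ (fun k => e k), if_pos (Finset.mem_compl.mpr hk₁)]
    · rw [if_neg h]
      refine ⟨fun k => (‖Q j‖ : ℂ)⁻¹ * c k j, ?_⟩
      rw [hQ, Finset.smul_sum]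
      exact Finset.sum_congr rfl (fun k _ => by rw [smul_smul])
  have hgorth : ∀ i ∈ I, ∀ j ∉ I, ⟪g i, g j⟫_ℂ = 0 := by
    intro i hi j hj
    obtain ⟨a, ha⟩ := hgI i hi
    obtain ⟨b, hb⟩ := hgJ j hj
    rw [ha, hb]
    exact inner_comb e disjoint_compl_right a b
  have herrI : ∀ i ∈ I, ‖g i - f i‖ ^ 2 ≤ 2 * ∑ k ∈ Kᶜ, ‖c k i‖ ^ 2 := by
    intro i hi
    have hgw : ⟪g i, Q i⟫_ℂ = 0 := by
      obtain ⟨a, ha⟩ := hgI i hi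
      rw [ha]
      exact inner_comb e disjoint_compl_right a _
    have hgv : P i ≠ 0 → g i = ((‖P i‖ : ℂ))⁻¹ • P i := by
      intro h
      simp only [hg, if_pos hi, if_neg h]
    have := perturb (P i) (Q i) (g i) (hPQorth i i) (hsplit i) (hgunit i) hgw hgv
    rw [hPQ i] at this
    rw [← hQnorm]
    exact this
  have herrJ : ∀ j ∉ I, ‖g j - f j‖ ^ 2 ≤ 2 * ∑ k ∈ K, ‖c k j‖ ^ 2 := by
    intro j hj
    have hgw : ⟪g j, P j⟫_ℂ = 0 := by
      obtain ⟨b, hb⟩ := hgJ j hj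
      rw [hb]
      exact inner_comb e disjoint_compl_right.symm b _
    have hgv : Q j ≠ 0 → g j = ((‖Q j‖ : ℂ))⁻¹ • Q j := by
      intro h
      simp only [hg, if_neg hj, if_neg h]
    have hQP : ⟪Q j, P j⟫_ℂ = 0 := inner_comb e disjoint_compl_right.symm _ _
    have := perturb (Q j) (P j) (g j) hQP (by rw [add_comm]; exact hsplit j)
      (hgunit j) hgw hgv
    rw [add_comm, hPQ j] at this
    rw [← hPnorm]
    exact this
  -- matrix
  set Ft : Matrix (Fin M) (Fin N) ℂ := Matrix.of fun m n => g n m with hFt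
  have hcol : ∀ n, col Ft n = g n := fun n => rfl
  refine ⟨Ft, ?_, ?_, ?_⟩
  · intro n
    rw [hcol]
    exact hgunit n
  · intro i hi j hj
    rw [hcol, hcol]
    exact hgorth i hi j hj
  · -- distance bound
    have hNpos : (0 : ℝ) < N := by exact_mod_cast hN2
    set a : ℝ := ((M : ℝ) * ε) ^ ((1 : ℝ) / 3) with ha_def
    have hMε0 : (0 : ℝ) ≤ (M : ℝ) * ε := by positivity
    have ha0 : 0 ≤ a := Real.rpow_nonneg hMε0 _
    have ha3 : a ^ 3 = (M : ℝ) * ε := by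
      rw [ha_def, ← Real.rpow_natCast (((M : ℝ) * ε) ^ ((1 : ℝ) / 3)) 3,
        ← Real.rpow_mul hMε0]
      norm_num
    have hone : a * (1 + ε) ≤ 1 := by
      have hb0 : 0 ≤ a * (1 + ε) := by positivity
      have hb3 : (a * (1 + ε)) ^ 3 ≤ 1 := by
        have he1 : (a * (1 + ε)) ^ 3 = a ^ 3 * (1 + ε) ^ 3 := by ring
        rw [he1, ha3]
        have h12 : (1 + ε) ^ 3 ≤ ((5 : ℝ) / 4) ^ 3 :=
          pow_le_pow_left₀ (by linarith [hε0]) (by linarith [hεQ]) 3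
        have h13 : (M : ℝ) * ε * (1 + ε) ^ 3 ≤ (1 / 2) * ((5 : ℝ) / 4) ^ 3 :=
          mul_le_mul hMε h12 (by positivity) (by norm_num)
        nlinarith [h13]
      exact (pow_le_one_iff_of_nonneg hb0 (by norm_num)).mp hb3
    have hhsq : hsq (Ft - F) = ∑ n, ‖g n - f n‖ ^ 2 := by
      rw [show hsq (Ft - F) = ∑ m, ∑ n, ‖(Ft - F) m n‖ ^ 2 from rfl, Finset.sum_comm]
      refine Finset.sum_congr rfl fun n _ => ?_
      rw [norm_sq_eucl (g n - f n)]
      rfl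
    have hsplitsum : ∑ n, ‖g n - f n‖ ^ 2
        = ∑ i ∈ I, ‖g i - f i‖ ^ 2 + ∑ j ∈ Iᶜ, ‖g j - f j‖ ^ 2 :=
      (Finset.sum_add_sum_compl I _).symm
    have hKcompl : ∀ k ∈ Kᶜ, μ k ≤ t := fun k hk =>
      (hAchar k fun hkA => (Finset.mem_compl.mp hk) (Finset.mem_insert_of_mem hkA)).le
    have hcard_le : ∀ s : Finset (Fin M), (s.card : ℝ) ≤ M := by
      intro s
      calc (s.card : ℝ) ≤ (Fintype.card (Fin M) : ℝ) := by
            exact_mod_cast Finset.card_le_univ s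
      _ = M := by simp
    have hS1 : ∑ i ∈ I, ‖g i - f i‖ ^ 2 ≤ 2 * ((M : ℝ) * t) := by
      calc ∑ i ∈ I, ‖g i - f i‖ ^ 2 ≤ ∑ i ∈ I, 2 * ∑ k ∈ Kᶜ, ‖c k i‖ ^ 2 :=
          Finset.sum_le_sum fun i hi => herrI i hi
      _ = 2 * ∑ k ∈ Kᶜ, ∑ i ∈ I, ‖c k i‖ ^ 2 := by
          rw [← Finset.mul_sum, Finset.sum_comm]
      _ = 2 * ∑ k ∈ Kᶜ, μ k := by
          rw [Finset.sum_congr rfl fun k _ => (hμ_eq k).symm]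
      _ ≤ 2 * ∑ _k ∈ Kᶜ, t := by
          have := Finset.sum_le_sum hKcompl
          linarith
      _ = 2 * ((Kᶜ.card : ℝ) * t) := by rw [Finset.sum_const, nsmul_eq_mul]
      _ ≤ 2 * ((M : ℝ) * t) := by
          have h3 := hcard_le Kᶜ
          have h4 := mul_le_mul_of_nonneg_right h3 htpos.le
          linarith
    set B : ℝ := 2 * ε * I.card / N with hB_def
    have hB0 : 0 ≤ B := by
      rw [hB_def]
      exact div_nonneg (mul_nonneg (mul_nonneg (by norm_num) hε0.le) (Nat.cast_nonneg _))
        (Nat.cast_nonneg _)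
    have hBt : B * t = ε ^ 2 * I.card := by
      rw [hB_def, ht_def]
      field_simp
    have hjb : ∀ j ∉ I, ∑ k ∈ K, ‖c k j‖ ^ 2 ≤ (M : ℝ) * B + M * ε ^ 2 := by
      intro j hj
      have hAk : ∀ k ∈ A, ‖c k j‖ ^ 2 ≤ B := by
        intro k hk
        have h1 : ‖c k j‖ ^ 2 * t ≤ B * t := by
          rw [hBt]
          calc ‖c k j‖ ^ 2 * t = t * ‖c k j‖ ^ 2 := mul_comm _ _
          _ ≤ μ k * ‖c k j‖ ^ 2 := mul_le_mul_of_nonneg_right (hAchar2 k hk) (sq_nonneg _)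
          _ ≤ ε ^ 2 * I.card := hkey k j hj
        exact le_of_mul_le_mul_right h1 htpos
      have hk₀b : ‖c k₀ j‖ ^ 2 ≤ (M : ℝ) * ε ^ 2 := by
        have h1 := hkey k₀ j hj
        have h2 : ‖c k₀ j‖ ^ 2 * μ k₀ ≤ ((M : ℝ) * ε ^ 2) * μ k₀ := by
          have h3 : ε ^ 2 * (I.card : ℝ) ≤ ε ^ 2 * ((M : ℝ) * μ k₀) :=
            mul_le_mul_of_nonneg_left hk₀ (sq_nonneg ε)
          calc ‖c k₀ j‖ ^ 2 * μ k₀ = μ k₀ * ‖c k₀ j‖ ^ 2 := mul_comm _ _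
          _ ≤ ε ^ 2 * I.card := h1
          _ ≤ ε ^ 2 * ((M : ℝ) * μ k₀) := h3
          _ = ((M : ℝ) * ε ^ 2) * μ k₀ := by ring
        exact le_of_mul_le_mul_right h2 hk₀pos
      have hsub : ∑ k ∈ K, ‖c k j‖ ^ 2 ≤ ∑ k ∈ A, ‖c k j‖ ^ 2 + ‖c k₀ j‖ ^ 2 := by
        by_cases h : k₀ ∈ A
        · have hKA : K = A := by rw [hK, Finset.insert_eq_self.mpr h]
          rw [hKA]
          linarith [sq_nonneg ‖c k₀ j‖]
        · rw [hK, Finset.sum_insert h]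
          linarith
      have hsA : ∑ k ∈ A, ‖c k j‖ ^ 2 ≤ (A.card : ℝ) * B := by
        have h5 := Finset.sum_le_card_nsmul A _ B hAk
        rwa [nsmul_eq_mul] at h5
      have hcA : (A.card : ℝ) ≤ M := hcard_le A
      have h6 : (A.card : ℝ) * B ≤ M * B := mul_le_mul_of_nonneg_right hcA hB0
      linarith
    have hNIJ : (I.card : ℝ) + (Iᶜ.card : ℝ) = N := by
      have h := Finset.card_add_card_compl I
      rw [Fintype.card_fin] at h
      exact_mod_cast h
    have hNJle : ((Iᶜ.card : ℕ) : ℝ) ≤ N := by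
      calc ((Iᶜ.card : ℕ) : ℝ) ≤ (Fintype.card (Fin N) : ℝ) := by
            exact_mod_cast Finset.card_le_univ Iᶜ
      _ = N := by simp
    have hNJb : (Iᶜ.card : ℝ) * B ≤ (N : ℝ) * ε / 2 := by
      have h4 : 4 * (I.card : ℝ) * Iᶜ.card ≤ (N : ℝ) ^ 2 := by
        nlinarith [sq_nonneg ((I.card : ℝ) - Iᶜ.card), hNIJ]
      have h5 : ((Iᶜ.card : ℝ) * B) * N ≤ ((N : ℝ) * ε / 2) * N := by
        have h6 : ((Iᶜ.card : ℝ) * B) * N = 2 * ε * I.card * Iᶜ.card := by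
          rw [hB_def, mul_assoc, div_mul_cancel₀ _ hNpos.ne']
          ring
        rw [h6]
        have h7 := mul_le_mul_of_nonneg_left h4 (by positivity : (0 : ℝ) ≤ ε / 2)
        nlinarith [h7]
      exact le_of_mul_le_mul_right h5 hNpos
    have hS2 : ∑ j ∈ Iᶜ, ‖g j - f j‖ ^ 2
        ≤ 2 * ((Iᶜ.card : ℝ) * ((M : ℝ) * B + M * ε ^ 2)) := by
      calc ∑ j ∈ Iᶜ, ‖g j - f j‖ ^ 2 ≤ ∑ j ∈ Iᶜ, 2 * ∑ k ∈ K, ‖c k j‖ ^ 2 :=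
          Finset.sum_le_sum fun j hj => herrJ j (Finset.mem_compl.mp hj)
      _ ≤ ∑ _j ∈ Iᶜ, 2 * ((M : ℝ) * B + M * ε ^ 2) := by
          refine Finset.sum_le_sum fun j hj => ?_
          have := hjb j (Finset.mem_compl.mp hj)
          linarith
      _ = (Iᶜ.card : ℝ) * (2 * ((M : ℝ) * B + M * ε ^ 2)) := by
          rw [Finset.sum_const, nsmul_eq_mul]
      _ = 2 * ((Iᶜ.card : ℝ) * ((M : ℝ) * B + M * ε ^ 2)) := by ring
    have hM0 : (0 : ℝ) ≤ (M : ℝ) := Nat.cast_nonneg M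
    have htotal : ∑ n, ‖g n - f n‖ ^ 2 ≤ 2 * N * (a ^ 3 * (1 + ε)) := by
      rw [hsplitsum]
      have e1 : 2 * ((M : ℝ) * t) = M * N * ε := by rw [ht_def]; ring
      have e2 : 2 * (N : ℝ) * (a ^ 3 * (1 + ε)) = 2 * M * N * ε + 2 * M * N * ε ^ 2 := by
        rw [ha3]; ring
      rw [e2]
      have h7a : (M : ℝ) * ((Iᶜ.card : ℝ) * B) ≤ M * ((N : ℝ) * ε / 2) :=
        mul_le_mul_of_nonneg_left hNJb hM0
      have h7b : (M : ℝ) * ε ^ 2 * (Iᶜ.card : ℝ) ≤ M * ε ^ 2 * N :=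
        mul_le_mul_of_nonneg_left hNJle (by positivity)
      nlinarith [hS1, hS2, h7a, h7b, e1]
    have hfinal : hsq (Ft - F) ≤ 2 * N * a ^ 2 := by
      rw [hhsq]
      have h9 : a ^ 3 * (1 + ε) ≤ a ^ 2 := by
        have h10 := mul_le_mul_of_nonneg_left hone (sq_nonneg a)
        nlinarith [h10]
      have h11 : 2 * (N : ℝ) * (a ^ 3 * (1 + ε)) ≤ 2 * N * a ^ 2 :=
        mul_le_mul_of_nonneg_left h9 (by positivity)
      linarith [htotal]
    calc Real.sqrt (hsq (Ft - F)) ≤ Real.sqrt (2 * N * a ^ 2) := Real.sqrt_le_sqrt hfinal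
    _ = Real.sqrt (2 * N) * a := by
        rw [Real.sqrt_mul (by positivity) (a ^ 2), Real.sqrt_sq ha0]
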